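/- Suppose A is a finite set of integers, A ⊕ C = ℤ is a tiling, and r is an integer relatively prime to #A. Then rA ⊕ C = ℤ is also a tiling, where rA = {ra : a ∈ A}. -/

import Mathlib

set_option linter.unusedSectionVars false

/-- `A ⊕ C = ℤ`: every integer has a unique representation `a + c`. -/
def IsTiling (A : Set ℤ) (C : Set ℤ) : Prop :=
  ∀ z : ℤ, ∃! p : ℤ × ℤ, p.1 ∈ A ∧ p.2 ∈ C ∧ p.1 + p.2 = z

lemma isTiling_iff (S C : Set ℤ) :
    IsTiling S C ↔ ∀ z : ℤ, ∃! x : ℤ, x ∈ S ∧ z - x ∈ C := by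
  constructor
  · intro h z
    obtain ⟨p, ⟨hp1, hp2, hp3⟩, hu⟩ := h z
    refine ⟨p.1, ⟨hp1, by rw [show z - p.1 = p.2 by omega]; exact hp2⟩, ?_⟩
    intro x ⟨hx1, hx2⟩
    have := hu (x, z - x) ⟨hx1, hx2, by ring⟩
    rw [← this]
  · intro h z
    obtain ⟨x, ⟨hx1, hx2⟩, hu⟩ := h z
    refine ⟨(x, z - x), ⟨hx1, hx2, by ring⟩, ?_⟩
    rintro ⟨a, c⟩ ⟨h1, h2, h3⟩
    have ha : a = x := hu a ⟨h1, by rw [show z - a = c by omega]; exact h2⟩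
    simp only [Prod.mk.injEq]
    exact ⟨ha, by omega⟩

open Classical in
lemma existsUnique_iff_card (B : Finset ℤ) (P : ℤ → Prop) :
    (∃! x : ℤ, x ∈ B ∧ P x) ↔ (B.filter P).card = 1 := by
  classical
  rw [Finset.card_eq_one]
  constructor
  · rintro ⟨x, ⟨hx, hP⟩, hu⟩
    exact ⟨x, Finset.eq_singleton_iff_unique_mem.2 ⟨Finset.mem_filter.2 ⟨hx, hP⟩,
      fun y hy => hu y (Finset.mem_filter.1 hy)⟩⟩
  · rintro ⟨x, hx⟩
    have hxm := Finset.mem_filter.1 (hx ▸ Finset.mem_singleton_self x)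
    exact ⟨x, hxm, fun y hy => by
      have : y ∈ B.filter P := Finset.mem_filter.2 hy
      rw [hx] at this; exact Finset.mem_singleton.1 this⟩

lemma tiling_image_iff (B : Finset ℤ) (C : Set ℤ) (s : ℤ) (hs : s ≠ 0) :
    IsTiling (↑(B.image fun a => s * a)) C ↔ ∀ z : ℤ, ∃! a : ℤ, a ∈ B ∧ z - s * a ∈ C := by
  rw [isTiling_iff]
  constructor
  · intro h z
    obtain ⟨x, ⟨hx1, hx2⟩, hu⟩ := h z
    simp only [Finset.coe_image, Set.mem_image, Finset.mem_coe] at hx1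
    obtain ⟨a, ha, rfl⟩ := hx1
    refine ⟨a, ⟨ha, hx2⟩, ?_⟩
    intro a' ⟨ha', hc'⟩
    have hmem : (s * a' : ℤ) ∈ (↑(B.image fun a => s * a) : Set ℤ) := by
      simp only [Finset.coe_image, Set.mem_image, Finset.mem_coe]
      exact ⟨a', ha', rfl⟩
    have : s * a' = s * a := hu (s * a') ⟨hmem, hc'⟩
    exact mul_left_cancel₀ hs this
  · intro h z
    obtain ⟨a, ⟨ha1, ha2⟩, hu⟩ := h z
    have hmem : (s * a : ℤ) ∈ (↑(B.image fun a => s * a) : Set ℤ) := by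
      simp only [Finset.coe_image, Set.mem_image, Finset.mem_coe]
      exact ⟨a, ha1, rfl⟩
    refine ⟨s * a, ⟨hmem, ha2⟩, ?_⟩
    intro x ⟨hx1, hx2⟩
    simp only [Finset.coe_image, Set.mem_image, Finset.mem_coe] at hx1
    obtain ⟨a', ha', rfl⟩ := hx1
    rw [hu a' ⟨ha', hx2⟩]

section
variable (A : Finset ℤ) (C : Set ℤ)

lemma periodicity (hA : A.Nonempty)
    (h : ∀ z : ℤ, ∃! x : ℤ, x ∈ A ∧ z - x ∈ C) :
    ∃ n : ℕ, 0 < n ∧ ∀ t : ℤ, t ∈ C ↔ t + n ∈ C := by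
  classical
  set m := A.min' hA with hm
  set M := A.max' hA with hM
  set D : ℤ := M - m with hD
  have hD0 : 0 ≤ D := by
    have := A.min'_le M (A.max'_mem hA)
    omega
  -- forward determinism
  have fwd : ∀ t : ℤ, (t + D + 1 ∈ C ↔ ∀ a ∈ A, a ≠ m → t + D + 1 + m - a ∉ C) := by
    intro t
    obtain ⟨x, ⟨hx, hxc⟩, hu⟩ := h (t + D + 1 + m)
    constructor
    · intro hC a ha hne hcon
      have h1 : m = x := hu m ⟨A.min'_mem hA, by rw [show t + D + 1 + m - m = t + D + 1 by ring]; exact hC⟩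
      have h2 : a = x := hu a ⟨ha, hcon⟩
      exact hne (h2.trans h1.symm)
    · intro hall
      by_cases hxm : x = m
      · have := hxc
        rw [hxm, show t + D + 1 + m - m = t + D + 1 by ring] at this
        exact this
      · exact absurd hxc (hall x hx hxm)
  -- backward determinism
  have bwd : ∀ t : ℤ, (t - 1 ∈ C ↔ ∀ a ∈ A, a ≠ M → t - 1 + M - a ∉ C) := by
    intro t
    obtain ⟨x, ⟨hx, hxc⟩, hu⟩ := h (t - 1 + M)
    constructor
    · intro hC a ha hne hcon
      have h1 : M = x := hu M ⟨A.max'_mem hA, by rw [show t - 1 + M - M = t - 1 by ring]; exact hC⟩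
      have h2 : a = x := hu a ⟨ha, hcon⟩
      exact hne (h2.trans h1.symm)
    · intro hall
      by_cases hxm : x = M
      · have := hxc
        rw [hxm, show t - 1 + M - M = t - 1 by ring] at this
        exact this
      · exact absurd hxc (hall x hx hxm)
  -- bounds for elements of A
  have hbnd : ∀ a ∈ A, m ≤ a ∧ a ≤ M := fun a ha => ⟨A.min'_le a ha, A.le_max' a ha⟩
  -- key propagation
  have key : ∀ t1 t2 : ℤ,
      (∀ j : ℤ, 0 ≤ j → j ≤ D → (t1 + j ∈ C ↔ t2 + j ∈ C)) →
      ∀ s : ℤ, ∀ j : ℤ, 0 ≤ j → j ≤ D → (t1 + s + j ∈ C ↔ t2 + s + j ∈ C) := by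
    intro t1 t2 base s
    induction s using Int.induction_on with
    | zero => simpa using base
    | succ i IH =>
      intro j hj0 hjD
      by_cases hjd : j ≤ D - 1
      · have := IH (j + 1) (by omega) (by omega)
        rw [show t1 + (i + 1) + j = t1 + i + (j + 1) by ring,
            show t2 + (i + 1) + j = t2 + i + (j + 1) by ring]
        exact this
      · have hjD' : j = D := by omega
        subst hjD'
        rw [show t1 + (↑i + 1) + D = (t1 + i) + D + 1 by ring,
            show t2 + (↑i + 1) + D = (t2 + i) + D + 1 by ring,
            fwd (t1 + i), fwd (t2 + i)]
        constructor
        · intro hall a ha hne hcon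
          obtain ⟨hma, haM⟩ := hbnd a ha
          have hoff : t2 + ↑i + D + 1 + m - a = t2 + i + (D + 1 + m - a) := by ring
          have hoff1 : t1 + ↑i + D + 1 + m - a = t1 + i + (D + 1 + m - a) := by ring
          have := (IH (D + 1 + m - a) (by omega) (by omega)).2 (by rw [← hoff]; exact hcon)
          exact hall a ha hne (by rw [hoff1]; exact this)
        · intro hall a ha hne hcon
          obtain ⟨hma, haM⟩ := hbnd a ha
          have hoff : t1 + ↑i + D + 1 + m - a = t1 + i + (D + 1 + m - a) := by ring
          have hoff2 : t2 + ↑i + D + 1 + m - a = t2 + i + (D + 1 + m - a) := by ring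
          have := (IH (D + 1 + m - a) (by omega) (by omega)).1 (by rw [← hoff]; exact hcon)
          exact hall a ha hne (by rw [hoff2]; exact this)
    | pred i IH =>
      intro j hj0 hjD
      by_cases hj1 : 1 ≤ j
      · have := IH (j - 1) (by omega) (by omega)
        rw [show t1 + (-↑i - 1) + j = t1 + (-↑i) + (j - 1) by ring,
            show t2 + (-↑i - 1) + j = t2 + (-↑i) + (j - 1) by ring]
        exact this
      · have hj0' : j = 0 := by omega
        subst hj0'
        rw [show t1 + (-↑i - 1) + 0 = (t1 + (-↑i)) - 1 by ring,
            show t2 + (-↑i - 1) + 0 = (t2 + (-↑i)) - 1 by ring,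
            bwd (t1 + (-↑i)), bwd (t2 + (-↑i))]
        constructor
        · intro hall a ha hne hcon
          obtain ⟨hma, haM⟩ := hbnd a ha
          have hne' : a ≠ M := hne
          have hoff : t2 + -↑i - 1 + M - a = t2 + (-↑i) + (M - a - 1) := by ring
          have hoff1 : t1 + -↑i - 1 + M - a = t1 + (-↑i) + (M - a - 1) := by ring
          have hMa : a < M := lt_of_le_of_ne haM hne'
          have := (IH (M - a - 1) (by omega) (by omega)).2 (by rw [← hoff]; exact hcon)
          exact hall a ha hne (by rw [hoff1]; exact this)
        · intro hall a ha hne hcon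
          obtain ⟨hma, haM⟩ := hbnd a ha
          have hMa : a < M := lt_of_le_of_ne haM hne
          have hoff : t1 + -↑i - 1 + M - a = t1 + (-↑i) + (M - a - 1) := by ring
          have hoff2 : t2 + -↑i - 1 + M - a = t2 + (-↑i) + (M - a - 1) := by ring
          have := (IH (M - a - 1) (by omega) (by omega)).1 (by rw [← hoff]; exact hcon)
          exact hall a ha hne (by rw [hoff2]; exact this)
  -- pigeonhole
  set Dn : ℕ := D.toNat with hDn
  set φ : ℤ → (Fin (Dn + 1) → Bool) := fun t => fun j => decide (t + (j : ℤ) ∈ C) with hφ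
  have hcard : (Finset.Icc (0:ℤ) (2 ^ (Dn + 1))).card > (Finset.univ : Finset (Fin (Dn+1) → Bool)).card := by
    rw [Int.card_Icc]
    simp [Fintype.card_fun]
  obtain ⟨x, hx, y, hy, hxy, hfeq⟩ :=
    Finset.exists_ne_map_eq_of_card_lt_of_maps_to hcard (fun a _ => Finset.mem_univ (φ a))
  -- wlog x < y
  rcases lt_or_gt_of_ne hxy with hlt | hlt
  case _ =>
    refine ⟨(y - x).toNat, by omega, ?_⟩
    intro t
    have base : ∀ j : ℤ, 0 ≤ j → j ≤ D → (x + j ∈ C ↔ y + j ∈ C) := by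
      intro j hj0 hjD
      have := congrFun hfeq ⟨j.toNat, by omega⟩
      simp only [hφ] at this
      rw [decide_eq_decide] at this
      rwa [Int.toNat_of_nonneg hj0] at this
    have := key x y base (t - x) 0 le_rfl hD0
    rw [show x + (t - x) + 0 = t by ring, show y + (t - x) + 0 = t + (y - x) by ring] at this
    rw [Int.toNat_of_nonneg (by omega)]
    exact this
  case _ =>
    refine ⟨(x - y).toNat, by omega, ?_⟩
    intro t
    have base : ∀ j : ℤ, 0 ≤ j → j ≤ D → (y + j ∈ C ↔ x + j ∈ C) := by
      intro j hj0 hjD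
      have := congrFun hfeq ⟨j.toNat, by omega⟩
      simp only [hφ] at this
      rw [decide_eq_decide] at this
      rw [Int.toNat_of_nonneg hj0] at this
      exact this.symm
    have := key y x base (t - y) 0 le_rfl hD0
    rw [show y + (t - y) + 0 = t by ring, show x + (t - y) + 0 = t + (x - y) by ring] at this
    rwa [Int.toNat_of_nonneg (by omega)]
end

section Counting
open Classical in
noncomputable def Cbar (C : Set ℤ) (n : ℕ) [NeZero n] : Finset (ZMod n) :=
  Finset.univ.filter (fun ζ => ∃ c ∈ C, (c : ZMod n) = ζ)

noncomputable def Nbar (C : Set ℤ) (n : ℕ) [NeZero n] (B : Finset ℤ) (s : ℤ) (ξ : ZMod n) : ℕ :=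
  (B.filter (fun a => ξ - ((s * a : ℤ) : ZMod n) ∈ Cbar C n)).card

variable {C : Set ℤ} {n : ℕ} [NeZero n]

lemma per_mul (hper : ∀ t : ℤ, t ∈ C ↔ t + n ∈ C) (k t : ℤ) : t ∈ C ↔ t + k * n ∈ C := by
  induction k using Int.induction_on with
  | zero => simp
  | succ i IH =>
    rw [IH, show t + (↑i + 1) * n = (t + i * n) + n by ring]
    exact hper _
  | pred i IH =>
    rw [IH, show t + (-↑i) * n = (t + (-↑i - 1) * n) + n by ring]
    exact (hper _).symm

lemma mem_Cbar (hper : ∀ t : ℤ, t ∈ C ↔ t + n ∈ C) (z : ℤ) :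
    (z : ZMod n) ∈ Cbar C n ↔ z ∈ C := by
  classical
  unfold Cbar
  simp only [Finset.mem_filter, Finset.mem_univ, true_and]
  constructor
  · rintro ⟨c, hc, hcz⟩
    rw [ZMod.intCast_eq_intCast_iff] at hcz
    obtain ⟨k, hk⟩ := hcz.dvd
    have : z = c + k * n := by linear_combination hk
    rw [this]
    exact (per_mul hper k c).1 hc
  · intro hz
    exact ⟨z, hz, rfl⟩

lemma cast_surj (ξ : ZMod n) : ((ξ.val : ℤ) : ZMod n) = ξ := by
  push_cast
  simp [ZMod.natCast_val]

lemma existsUnique_iff_Nbar (hper : ∀ t : ℤ, t ∈ C ↔ t + n ∈ C) (B : Finset ℤ) (s : ℤ) :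
    (∀ z : ℤ, ∃! a : ℤ, a ∈ B ∧ z - s * a ∈ C) ↔ ∀ ξ : ZMod n, Nbar C n B s ξ = 1 := by
  classical
  have hpred : ∀ (z : ℤ) (a : ℤ), (z - s * a ∈ C) ↔ ((z : ZMod n) - ((s * a : ℤ) : ZMod n) ∈ Cbar C n) := by
    intro z a
    rw [show ((z : ZMod n) - ((s*a : ℤ) : ZMod n)) = ((z - s*a : ℤ) : ZMod n) by push_cast; ring]
    exact (mem_Cbar hper _).symm
  have key : ∀ z : ℤ, (∃! a : ℤ, a ∈ B ∧ z - s * a ∈ C) ↔ Nbar C n B s (z : ZMod n) = 1 := by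
    intro z
    unfold Nbar
    rw [Finset.card_eq_one]
    constructor
    · rintro ⟨a, ⟨ha, hac⟩, hu⟩
      refine ⟨a, Finset.eq_singleton_iff_unique_mem.2 ⟨Finset.mem_filter.2 ⟨ha, (hpred z a).1 hac⟩, ?_⟩⟩
      intro y hy
      obtain ⟨hy1, hy2⟩ := Finset.mem_filter.1 hy
      exact hu y ⟨hy1, (hpred z y).2 hy2⟩
    · intro hcard
      obtain ⟨a, ha⟩ := hcard
      have ham := Finset.mem_filter.1 (ha ▸ Finset.mem_singleton_self a)
      refine ⟨a, ⟨ham.1, (hpred z a).2 ham.2⟩, ?_⟩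
      intro y ⟨hy1, hy2⟩
      have : y ∈ B.filter (fun a => (z:ZMod n) - ((s*a : ℤ) : ZMod n) ∈ Cbar C n) :=
        Finset.mem_filter.2 ⟨hy1, (hpred z y).1 hy2⟩
      rw [ha] at this
      exact Finset.mem_singleton.1 this
  constructor
  · intro h ξ
    have := (key (ξ.val : ℤ)).1 (h _)
    rwa [cast_surj] at this
  · intro h z
    exact (key z).2 (h _)

lemma Nbar_sum (B : Finset ℤ) (s : ℤ) :
    ∑ ξ : ZMod n, Nbar C n B s ξ = B.card * (Cbar C n).card := by
  classical
  unfold Nbar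
  simp only [Finset.card_filter]
  rw [Finset.sum_comm]
  have : ∀ a ∈ B, (∑ ξ : ZMod n, if ξ - ((s * a : ℤ) : ZMod n) ∈ Cbar C n then 1 else 0)
      = (Cbar C n).card := by
    intro a _
    rw [show (∑ ξ : ZMod n, if ξ - ((s * a : ℤ) : ZMod n) ∈ Cbar C n then 1 else 0)
        = (Finset.univ.filter (fun ξ : ZMod n => ξ - ((s * a : ℤ) : ZMod n) ∈ Cbar C n)).card
      from (Finset.card_filter _ _).symm]
    have himg : Finset.univ.filter (fun ξ : ZMod n => ξ - ((s * a : ℤ) : ZMod n) ∈ Cbar C n)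
        = (Cbar C n).image (· + ((s * a : ℤ) : ZMod n)) := by
      ext ξ
      simp only [Finset.mem_filter, Finset.mem_univ, true_and, Finset.mem_image]
      constructor
      · intro hmem
        exact ⟨_, hmem, by ring⟩
      · rintro ⟨ζ, hζ, rfl⟩
        simpa using hζ
    rw [himg, Finset.card_image_of_injective _ (add_left_injective _)]
  rw [Finset.sum_congr rfl this, Finset.sum_const, smul_eq_mul]

section Algebra
variable (p n : ℕ) [Fact p.Prime] [NeZero n]

noncomputable def sng (ζ : ZMod n) : MonoidAlgebra (ZMod p) (Multiplicative (ZMod n)) :=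
  MonoidAlgebra.single (Multiplicative.ofAdd ζ) 1

noncomputable def uu : MonoidAlgebra (ZMod p) (Multiplicative (ZMod n)) :=
  ∑ ζ : ZMod n, sng p n ζ

variable {p n}

lemma sng_mul (x y : ZMod n) : sng p n x * sng p n y = sng p n (x + y) := by
  unfold sng
  rw [MonoidAlgebra.single_mul_single, one_mul, ← ofAdd_add]

lemma sng_pow (k : ℕ) (x : ZMod n) : sng p n x ^ k = sng p n (k • x) := by
  unfold sng
  rw [MonoidAlgebra.single_pow, one_pow, ofAdd_nsmul]

lemma charR : CharP (MonoidAlgebra (ZMod p) (Multiplicative (ZMod n))) p := by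
  apply charP_of_injective_ringHom
    (f := (MonoidAlgebra.singleOneRingHom :
      ZMod p →+* MonoidAlgebra (ZMod p) (Multiplicative (ZMod n))))
  intro x y hxy
  have hx : ∀ z : ZMod p, (MonoidAlgebra.singleOneRingHom
      (R := ZMod p) (M := Multiplicative (ZMod n))) z = MonoidAlgebra.single 1 z := fun _ => rfl
  rw [hx, hx] at hxy
  exact MonoidAlgebra.single_right_injective hxy

lemma sum_sng_apply {ι : Type} (I : Finset ι) (τ : ι → ZMod n) (ξ : ZMod n) :
    (∑ i ∈ I, sng p n (τ i)).coeff (Multiplicative.ofAdd ξ)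
      = (((I.filter (fun i => τ i = ξ)).card : ℕ) : ZMod p) := by
  classical
  rw [MonoidAlgebra.coeff_sum, Finset.sum_apply']
  rw [Finset.card_filter, Nat.cast_sum]
  apply Finset.sum_congr rfl
  intro i _
  unfold sng
  rw [MonoidAlgebra.coeff_single, Finsupp.single_apply]
  by_cases hi : τ i = ξ <;> simp [hi]

lemma uu_apply (ξ : ZMod n) : (uu p n).coeff (Multiplicative.ofAdd ξ) = 1 := by
  classical
  unfold uu
  rw [sum_sng_apply Finset.univ (fun ζ => ζ) ξ]
  have : Finset.univ.filter (fun ζ : ZMod n => ζ = ξ) = {ξ} := by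
    ext ζ; simp
  rw [this]
  simp

lemma sng_mul_uu (x : ZMod n) : sng p n x * uu p n = uu p n := by
  unfold uu
  rw [Finset.mul_sum]
  have : ∀ ζ : ZMod n, sng p n x * sng p n ζ = sng p n (x + ζ) := fun ζ => sng_mul x ζ
  rw [Finset.sum_congr rfl (fun ζ _ => this ζ)]
  exact Fintype.sum_equiv (Equiv.addLeft x) _ _ (fun ζ => rfl)

lemma sum_sng_mul_uu {ι : Type} (I : Finset ι) (τ : ι → ZMod n) :
    (∑ i ∈ I, sng p n (τ i)) * uu p n = I.card • uu p n := by
  rw [Finset.sum_mul]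
  rw [Finset.sum_congr rfl (fun i _ => sng_mul_uu (τ i))]
  rw [Finset.sum_const]

lemma pow_sum_sng_mul_uu {ι : Type} (I : Finset ι) (τ : ι → ZMod n) (k : ℕ) :
    (∑ i ∈ I, sng p n (τ i)) ^ k * uu p n = (I.card ^ k) • uu p n := by
  induction k with
  | zero => simp
  | succ k IH =>
    rw [pow_succ, mul_assoc, sum_sng_mul_uu, mul_smul_comm, IH, smul_smul, pow_succ]
    ring_nf

lemma prod_coeff (C : Set ℤ) (B : Finset ℤ) (s : ℤ) (ξ : ZMod n) :
    ((∑ a ∈ B, sng p n ((s * a : ℤ) : ZMod n)) * (∑ ζ ∈ Cbar C n, sng p n ζ)).coeff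
        (Multiplicative.ofAdd ξ) = ((Nbar C n B s ξ : ℕ) : ZMod p) := by
  classical
  rw [Finset.sum_mul_sum]
  have h1 : ∀ a ∈ B, ∀ ζ ∈ Cbar C n,
      sng p n ((s * a : ℤ) : ZMod n) * sng p n ζ = sng p n (((s * a : ℤ) : ZMod n) + ζ) :=
    fun a _ ζ _ => sng_mul _ _
  rw [Finset.sum_congr rfl (fun a ha => Finset.sum_congr rfl (fun ζ hζ => h1 a ha ζ hζ))]
  rw [← Finset.sum_product']
  rw [sum_sng_apply (B ×ˢ Cbar C n) (fun q => ((s * q.1 : ℤ) : ZMod n) + q.2) ξ]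
  congr 1
  unfold Nbar
  apply Finset.card_bij (fun q _ => q.1)
  · rintro ⟨a, ζ⟩ hq
    obtain ⟨hmem, heq⟩ := Finset.mem_filter.1 hq
    obtain ⟨ha, hζ⟩ := Finset.mem_product.1 hmem
    refine Finset.mem_filter.2 ⟨ha, ?_⟩
    have : ξ - ((s * a : ℤ) : ZMod n) = ζ := by
      simp only at heq
      rw [← heq]; ring
    rw [this]; exact hζ
  · rintro ⟨a, ζ⟩ hq ⟨a', ζ'⟩ hq' heq
    simp only at heq
    obtain ⟨hmem, heqs⟩ := Finset.mem_filter.1 hq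
    obtain ⟨hmem', heqs'⟩ := Finset.mem_filter.1 hq'
    simp only at heqs heqs'
    subst heq
    have : ζ = ζ' := by
      have := heqs.trans heqs'.symm
      exact add_left_cancel this
    rw [this]
  · intro a ha
    obtain ⟨haB, haC⟩ := Finset.mem_filter.1 ha
    refine ⟨(a, ξ - ((s * a : ℤ) : ZMod n)), Finset.mem_filter.2 ⟨Finset.mem_product.2 ⟨haB, haC⟩, ?_⟩, rfl⟩
    simp only
    ring

lemma key_congruence (C : Set ℤ) (B : Finset ℤ) (hB : ¬ (p ∣ B.card))
    (htile : ∀ ξ : ZMod n, Nbar C n B 1 ξ = 1) (ξ : ZMod n) :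
    ((Nbar C n B p ξ : ℕ) : ZMod p) = 1 := by
  classical
  haveI : CharP (MonoidAlgebra (ZMod p) (Multiplicative (ZMod n))) p := charR
  set f := ∑ a ∈ B, sng p n ((1 * a : ℤ) : ZMod n) with hf
  set g := ∑ ζ ∈ Cbar C n, sng p n ζ with hg
  have hfg : f * g = uu p n := by
    apply MonoidAlgebra.coeff_injective
    apply Finsupp.ext
    intro γ
    rw [← ofAdd_toAdd γ, hf, hg, prod_coeff C B 1 γ.toAdd, htile, uu_apply]
    simp
  have hp' : p.Prime := Fact.out
  have hfp : (∑ a ∈ B, sng p n ((p * a : ℤ) : ZMod n)) = f ^ p := by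
    rw [hf, sum_pow_char]
    apply Finset.sum_congr rfl
    intro a _
    rw [sng_pow]
    congr 1
    push_cast
    ring
  have hBne : (B.card : ZMod p) ≠ 0 := by
    rwa [Ne, ZMod.natCast_eq_zero_iff]
  have hstep : (∑ a ∈ B, sng p n ((p * a : ℤ) : ZMod n)) * g = uu p n := by
    have hp1 : f ^ p = f ^ (p - 1) * f := by
      rw [← pow_succ, Nat.sub_add_cancel hp'.one_le]
    rw [hfp, hp1, mul_assoc, hfg, hf, pow_sum_sng_mul_uu]
    rw [← Nat.cast_smul_eq_nsmul (ZMod p), Nat.cast_pow, ZMod.pow_card_sub_one_eq_one hBne,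
      one_smul]
  have hc : ((∑ a ∈ B, sng p n ((p * a : ℤ) : ZMod n)) * g).coeff (Multiplicative.ofAdd ξ)
      = (uu p n).coeff (Multiplicative.ofAdd ξ) := by rw [hstep]
  rwa [hg, prod_coeff C B p ξ, uu_apply] at hc

lemma prime_step (C : Set ℤ) (B : Finset ℤ) (hB : ¬ (p ∣ B.card))
    (htile : ∀ ξ : ZMod n, Nbar C n B 1 ξ = 1) : ∀ ξ : ZMod n, Nbar C n B p ξ = 1 := by
  have hge : ∀ ξ : ZMod n, 1 ≤ Nbar C n B p ξ := by
    intro ξ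
    rcases Nat.eq_zero_or_pos (Nbar C n B p ξ) with h0 | h1
    · exfalso
      have := key_congruence C B hB htile ξ
      rw [h0] at this
      simp only [Nat.cast_zero] at this
      exact zero_ne_one this
    · exact h1
  have hsum : ∑ ξ : ZMod n, (1 : ℕ) = ∑ ξ : ZMod n, Nbar C n B p ξ := by
    rw [Nbar_sum B p]
    rw [show B.card * (Cbar C n).card = ∑ ξ : ZMod n, Nbar C n B 1 ξ from (Nbar_sum B 1).symm]
    exact Finset.sum_congr rfl (fun ξ _ => (htile ξ).symm)
  have := (Finset.sum_eq_sum_iff_of_le (fun ξ _ => hge ξ)).1 hsum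
  intro ξ
  exact (this ξ (Finset.mem_univ ξ)).symm
end Algebra

section Final

lemma Nbar_image {C : Set ℤ} {n : ℕ} [NeZero n] (B : Finset ℤ) (c s : ℤ) (hc : c ≠ 0) (ξ : ZMod n) :
    Nbar C n (B.image (fun a => c * a)) s ξ = Nbar C n B (s * c) ξ := by
  classical
  unfold Nbar
  rw [Finset.filter_image, Finset.card_image_of_injective _ (mul_right_injective₀ hc)]
  congr 1
  apply Finset.filter_congr
  intro a _
  rw [show (s * (c * a) : ℤ) = s * c * a by ring]

lemma Nbar_congr {C : Set ℤ} {n : ℕ} [NeZero n] (B : Finset ℤ) (s s' : ℤ)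
    (hss' : (n : ℤ) ∣ (s - s')) (ξ : ZMod n) :
    Nbar C n B s ξ = Nbar C n B s' ξ := by
  classical
  unfold Nbar
  congr 1
  apply Finset.filter_congr
  intro a _
  have hmod : s ≡ s' [ZMOD ((n : ℕ) : ℤ)] := Int.modEq_iff_dvd.2 (dvd_sub_comm.mp hss')
  have hcast : ((s * a : ℤ) : ZMod n) = ((s' * a : ℤ) : ZMod n) := by
    rw [ZMod.intCast_eq_intCast_iff]
    exact hmod.mul_right a
  rw [hcast]

lemma nat_step (C : Set ℤ) (n : ℕ) [NeZero n] :
    ∀ s : ℕ, 0 < s → ∀ B : Finset ℤ, Nat.Coprime s B.card →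
      (∀ ξ : ZMod n, Nbar C n B 1 ξ = 1) → ∀ ξ : ZMod n, Nbar C n B (s : ℤ) ξ = 1 := by
  intro s
  induction s using Nat.strong_induction_on with
  | _ s IH =>
    intro hs B hcop htile ξ
    rcases eq_or_ne s 1 with rfl | hs1
    · simpa using htile ξ
    · set p := s.minFac with hpdef
      have hp : p.Prime := Nat.minFac_prime hs1
      haveI : Fact p.Prime := ⟨hp⟩
      have hpz : ((p : ℕ) : ℤ) ≠ 0 := by exact_mod_cast hp.ne_zero
      set t := s / p with ht
      have hst : s = p * t := (Nat.div_mul_cancel s.minFac_dvd).symm.trans (by ring)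
      have htpos : 0 < t := by
        rcases Nat.eq_zero_or_pos t with h0 | h1
        · rw [h0, Nat.mul_zero] at hst; omega
        · exact h1
      have htlt : t < s := Nat.div_lt_self hs hp.one_lt
      have hpd : ¬ (p ∣ B.card) := by
        intro hdvd
        have : p ∣ Nat.gcd s B.card := Nat.dvd_gcd s.minFac_dvd hdvd
        rw [hcop] at this
        have h1 := Nat.le_of_dvd one_pos this
        have h2 := hp.two_le
        omega
      have step1 : ∀ ξ : ZMod n, Nbar C n B (p : ℤ) ξ = 1 := prime_step C B hpd htile
      set B' := B.image (fun a => (p : ℤ) * a) with hB'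
      have hcard' : B'.card = B.card := Finset.card_image_of_injective _ (mul_right_injective₀ hpz)
      have htile' : ∀ ξ : ZMod n, Nbar C n B' 1 ξ = 1 := by
        intro ξ
        rw [hB', Nbar_image B _ 1 hpz, one_mul]
        exact step1 ξ
      have hcop' : Nat.Coprime t B'.card := by
        rw [hcard']
        exact Nat.Coprime.coprime_dvd_left ⟨p, by rw [hst]; ring⟩ hcop
      have IHres : ∀ ξ : ZMod n, Nbar C n B' (t : ℤ) ξ = 1 := IH t htlt htpos B' hcop' htile'
      have hcast : ((s : ℕ) : ℤ) = (t : ℤ) * (p : ℤ) := by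
        rw [hst]; push_cast; ring
      rw [hcast, ← Nbar_image B _ (t : ℤ) hpz]
      exact IHres ξ

end Final

theorem tijdeman (A : Finset ℤ) (C : Set ℤ) (h : IsTiling (↑A) C)
    (r : ℤ) (hr : IsCoprime r (A.card : ℤ)) :
    IsTiling (↑(A.image fun a => r * a)) C := by
  classical
  have h1 : ∀ z : ℤ, ∃! x : ℤ, x ∈ A ∧ z - x ∈ C := by
    intro z
    obtain ⟨x, ⟨hx, hc⟩, hu⟩ := (isTiling_iff _ C).1 h z
    exact ⟨x, ⟨by exact_mod_cast hx, hc⟩,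
      fun y hy => hu y ⟨by exact_mod_cast hy.1, hy.2⟩⟩
  have hA : A.Nonempty := by
    obtain ⟨x, ⟨hx, _⟩, _⟩ := h1 0
    exact ⟨x, hx⟩
  rcases eq_or_ne r 0 with rfl | hr0
  · have hcard : (A.card : ℤ) = 1 := by
      have hu := isCoprime_zero_left.1 hr
      rcases Int.isUnit_iff.1 hu with h' | h'
      · exact h'
      · exfalso
        have : (0 : ℤ) ≤ (A.card : ℤ) := Int.natCast_nonneg _
        omega
    obtain ⟨a0, ha0⟩ := Finset.card_eq_one.1 (by exact_mod_cast hcard)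
    have hCuniv : ∀ z : ℤ, z ∈ C := by
      intro z
      obtain ⟨x, ⟨hx, hc⟩, _⟩ := h1 (z + a0)
      rw [ha0] at hx
      have hxa : x = a0 := Finset.mem_singleton.1 hx
      rw [hxa] at hc
      simpa using hc
    rw [isTiling_iff]
    intro z
    refine ⟨0, ⟨?_, hCuniv _⟩, ?_⟩
    · rw [ha0]; simp
    · intro y hy
      have hy1 := hy.1
      rw [ha0] at hy1
      simpa using hy1
  · obtain ⟨n, hn, hper⟩ := periodicity A C hA h1
    haveI : NeZero n := ⟨hn.ne'⟩
    have htile1 : ∀ ξ : ZMod n, Nbar C n A 1 ξ = 1 := by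
      apply (existsUnique_iff_Nbar hper A 1).1
      intro z
      simpa only [one_mul] using h1 z
    set s' : ℤ := r + (A.card : ℤ) * (((r.natAbs : ℤ) + 1) * (n : ℤ)) with hs'
    have hcop' : IsCoprime s' (A.card : ℤ) := IsCoprime.add_mul_left_left hr _
    have hc1 : (1 : ℤ) ≤ (A.card : ℤ) := by
      have := Finset.card_pos.2 hA
      exact_mod_cast this
    have hn1 : (1 : ℤ) ≤ (n : ℤ) := by exact_mod_cast hn
    have hra : -r ≤ (r.natAbs : ℤ) := by omega
    have hs'pos : 0 < s' := by
      have hX : ((r.natAbs : ℤ) + 1) * 1 ≤ ((r.natAbs : ℤ) + 1) * (n : ℤ) :=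
        mul_le_mul_of_nonneg_left hn1 (by omega)
      have hX0 : (0 : ℤ) ≤ ((r.natAbs : ℤ) + 1) * (n : ℤ) := by nlinarith
      have hY : 1 * (((r.natAbs : ℤ) + 1) * (n : ℤ)) ≤
          (A.card : ℤ) * (((r.natAbs : ℤ) + 1) * (n : ℤ)) :=
        mul_le_mul_of_nonneg_right hc1 hX0
      rw [hs']
      nlinarith
    set σ : ℕ := s'.natAbs with hσdef
    have hσs : (σ : ℤ) = s' := Int.natAbs_of_nonneg hs'pos.le
    have hσpos : 0 < σ := by omega
    have hσcop : Nat.Coprime σ A.card := by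
      have hg := Int.isCoprime_iff_gcd_eq_one.1 hcop'
      have : Int.gcd s' (A.card : ℤ) = Nat.gcd σ A.card := by
        rw [Int.gcd, hσdef, Int.natAbs_natCast]
      rwa [this] at hg
    have hstepped : ∀ ξ : ZMod n, Nbar C n A (σ : ℤ) ξ = 1 :=
      nat_step C n σ hσpos A hσcop htile1
    have hfinal : ∀ ξ : ZMod n, Nbar C n A r ξ = 1 := by
      intro ξ
      rw [Nbar_congr A r (σ : ℤ) ?_ ξ]
      · exact hstepped ξ
      · rw [hσs]
        exact ⟨-((A.card : ℤ) * ((r.natAbs : ℤ) + 1)), by rw [hs']; ring⟩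
    rw [tiling_image_iff A C r hr0]
    exact (existsUnique_iff_Nbar hper A r).2 hfinal
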